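/- Let E and k be natural numbers with 2 ≤ k ≤ E. Then, as an identity of integers, ∑_{i=0}^{k−2} (−1)^i · C(E, i) · γ(k−i, E−i) = (−1)^k · C(E−1, k). -/

import Mathlib

/-- `γ(m, F) = F·C(F−1, m−1) − C(F+1, m) + 1`, the first Betti number of the
`m`-particle combinatorial configuration space of the non-subdivided star graph
with `F` edges. -/
def gammaStar (m F : ℕ) : ℤ :=
  (F : ℤ) * ((F - 1).choose (m - 1)) - ((F + 1).choose m) + 1

lemma altsum (n m : ℕ) :
    ∑ i ∈ Finset.range (m + 1), (-1 : ℤ) ^ i * (n + 1).choose i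
      = (-1 : ℤ) ^ m * n.choose m := by
  induction m with
  | zero => simp
  | succ m ih =>
      rw [Finset.sum_range_succ, ih, Nat.choose_succ_succ n m]
      push_cast
      ring

lemma N1 (E k i : ℕ) (h : i + 2 ≤ k) (hkE : k ≤ E) :
    (E.choose i : ℤ) * ((E - i : ℕ) * (E - i - 1).choose (k - i - 1))
      = E.choose k * (k * (k - 1).choose i) := by
  obtain ⟨j, rfl⟩ := Nat.exists_eq_add_of_le h
  obtain ⟨e, rfl⟩ := Nat.exists_eq_add_of_le hkE
  have h1 : i + 2 + j + e - i = j + e + 2 := by omega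
  have h2 : i + 2 + j + e - i - 1 = j + e + 1 := by omega
  have h4 : i + 2 + j - i - 1 = j + 1 := by omega
  have h5 : i + 2 + j - 1 = i + 1 + j := by omega
  rw [h2, h1, h4, h5]
  have key := Nat.add_one_mul_choose_eq (j + e + 1) (j + 1)
  have tri := Nat.choose_mul (n := i + 2 + j + e) (k := i + 2 + j) (s := i)
      (by omega)
  have cm := Nat.choose_mul_succ_eq (i + 1 + j) i
  have e1 : i + 2 + j + e - i = j + e + 2 := by omega
  have e2 : i + 2 + j - i = j + 2 := by omega
  have e3 : i + 1 + j + 1 = i + 2 + j := by omega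
  have e4 : i + 1 + j + 1 - i = j + 2 := by omega
  rw [e1, e2] at tri
  rw [e4, e3] at cm
  have key' := congrArg (Nat.cast (R := ℤ)) key
  have tri' := congrArg (Nat.cast (R := ℤ)) tri
  have cm' := congrArg (Nat.cast (R := ℤ)) cm
  push_cast [Nat.succ_eq_add_one] at key' tri' cm' ⊢
  linear_combination ((i+2+j+e).choose i : ℤ) * key' - ((j:ℤ)+2) * tri' - ((i+2+j+e).choose (i+2+j) : ℤ) * cm'

lemma N2 (E k i : ℕ) (h : i + 2 ≤ k) (hkE : k ≤ E) :
    (E.choose i : ℤ) * ((E - i + 1).choose (k - i))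
      = E.choose k * k.choose i + E.choose (k - 1) * ((k - 1).choose i) := by
  obtain ⟨j, rfl⟩ := Nat.exists_eq_add_of_le h
  obtain ⟨e, rfl⟩ := Nat.exists_eq_add_of_le hkE
  have h1 : i + 2 + j + e - i = j + e + 2 := by omega
  have h2 : i + 2 + j - i = j + 2 := by omega
  have h3 : i + 2 + j - 1 = i + 1 + j := by omega
  rw [h1, h2, h3]
  have pas := Nat.choose_succ_succ (j + e + 2) (j + 1)
  have tri1 := Nat.choose_mul (n := i + 2 + j + e) (k := i + 2 + j) (s := i)
      (by omega)
  have tri2 := Nat.choose_mul (n := i + 2 + j + e) (k := i + 1 + j) (s := i)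
      (by omega)
  rw [h1, h2] at tri1
  have e1 : i + 1 + j - i = j + 1 := by omega
  rw [h1, e1] at tri2
  have pas' := congrArg (Nat.cast (R := ℤ)) pas
  have tri1' := congrArg (Nat.cast (R := ℤ)) tri1
  have tri2' := congrArg (Nat.cast (R := ℤ)) tri2
  push_cast at pas' tri1' tri2' ⊢
  have e2 : j + e + 2 + 1 = j + e + 2 + 1 := rfl
  linear_combination ((i + 2 + j + e).choose i : ℤ) * pas' - tri1' - tri2'

/-- Lemma 4 of the paper: `α_k^E = (−1)^k · C(E−1, k)` where
`α_k^E = ∑_{i=0}^{k−2} (−1)^i C(E,i) γ_{k−i}^{E−i}`. -/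
theorem star_alpha_eq (E k : ℕ) (h2 : 2 ≤ k) (hkE : k ≤ E) :
    ∑ i ∈ Finset.range (k - 1),
        (-1 : ℤ) ^ i * (E.choose i) * gammaStar (k - i) (E - i)
      = (-1 : ℤ) ^ k * ((E - 1).choose k) := by
  obtain ⟨m, rfl⟩ := Nat.exists_eq_add_of_le h2
  obtain ⟨d, rfl⟩ := Nat.exists_eq_add_of_le hkE
  have hr : 2 + m - 1 = m + 1 := by omega
  rw [hr]
  have step : ∀ i ∈ Finset.range (m + 1),
      (-1 : ℤ) ^ i * ((2 + m + d).choose i) * gammaStar (2 + m - i) (2 + m + d - i)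
        = (((2 + m + d).choose (2 + m) : ℤ) * (2 + m)) * ((-1) ^ i * ((2 + m - 1).choose i))
          - ((2 + m + d).choose (2 + m) : ℤ) * ((-1) ^ i * ((2 + m).choose i))
          - ((2 + m + d).choose (2 + m - 1) : ℤ) * ((-1) ^ i * ((2 + m - 1).choose i))
          + (-1) ^ i * ((2 + m + d).choose i) := by
    intro i hi
    rw [Finset.mem_range] at hi
    have hik : i + 2 ≤ 2 + m := by omega
    have hkE' : 2 + m ≤ 2 + m + d := by omega
    have n1 := N1 (2 + m + d) (2 + m) i hik hkE'
    have n2 := N2 (2 + m + d) (2 + m) i hik hkE'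
    simp only [gammaStar]
    push_cast at n1 n2 ⊢
    linear_combination ((-1 : ℤ)) ^ i * n1 - (-1 : ℤ) ^ i * n2
  rw [Finset.sum_congr rfl step]
  simp only [Finset.sum_add_distrib, Finset.sum_sub_distrib, ← Finset.mul_sum]
  rw [hr, show 2 + m + d - 1 = m + d + 1 by omega,
    show 2 + m = m + 1 + 1 by omega, show m + 1 + 1 + d = m + d + 1 + 1 by omega]
  rw [altsum m m, altsum (m + 1) m, altsum (m + d + 1) m]
  have pa1' := congrArg (Nat.cast (R := ℤ)) (Nat.choose_succ_succ (m + d + 1) (m + 1))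
  have pa2' := congrArg (Nat.cast (R := ℤ)) (Nat.choose_succ_succ (m + d + 1) m)
  simp only [Nat.choose_self, Nat.choose_succ_self_right] at *
  push_cast [Nat.succ_eq_add_one] at pa1' pa2' ⊢
  linear_combination ((-1 : ℤ)) ^ m * pa1' - (-1 : ℤ) ^ m * pa2'
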